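/- Let $c>0$ and let $X:(0,\infty)\to[0,\infty)$ satisfy $X'(t)\le 0$ and $\frac{d}{dt}(e^{ct}X(t))\le 0$ for $t>0$. Fix $0\le p_1<p_2<\infty$. Then equality $\frac{c^{p_2}Y_{p_2}(0)}{\Gamma(p_2+1)}=\frac{c^{p_1}Y_{p_1}(0)}{\Gamma(p_1+1)}<\infty$ holds if and only if $X(0):=\lim_{t\to0^+}X(t)<\infty$ and $X(t)=e^{-ct}X(0)$ for all $t\ge 0$. -/

import Mathlib

open MeasureTheory Set Filter ProbabilityTheory Real
open scoped ENNReal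

-- helper: antitone from deriv nonpos
lemma auxAnti (f : ℝ → ℝ) (hdiff : ∀ t > (0:ℝ), DifferentiableAt ℝ f t)
    (hd : ∀ t > (0:ℝ), deriv f t ≤ 0) : AntitoneOn f (Ioi 0) := by
  apply antitoneOn_of_deriv_nonpos (convex_Ioi 0)
  · exact fun t ht => (hdiff t ht).continuousAt.continuousWithinAt
  · exact fun t ht => ((hdiff t (by simpa using ht)).differentiableWithinAt)
  · exact fun t ht => hd t (by simpa using ht)

-- helper: gamma pdf lintegral on Ioi 0
lemma auxKeyC {p c : ℝ} (hp : 0 < p) (hc : 0 < c) :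
    ∫⁻ r in Ioi (0:ℝ), ENNReal.ofReal (gammaPDFReal p c r) = 1 := by
  have h1 : ∫⁻ r, gammaPDF p c r = 1 := lintegral_gammaPDF_eq_one hp hc
  have h2 : (volume : Measure ℝ).restrict (Ioi 0) = volume.restrict (Ici 0) :=
    Measure.restrict_congr_set Ioi_ae_eq_Ici
  have h3 : ∫⁻ r in Iio (0:ℝ), gammaPDF p c r = 0 := by
    rw [setLIntegral_congr_fun measurableSet_Iio
      (fun x (hx : x < 0) => gammaPDF_of_neg hx), lintegral_zero]
  have h4 := lintegral_add_compl (gammaPDF p c) (measurableSet_Ici (a := (0:ℝ))) (μ := volume)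
  rw [compl_Ici, h3, add_zero] at h4
  show ∫⁻ r in Ioi (0:ℝ), gammaPDF p c r = 1
  rw [h2, h4, h1]

-- helper: integrability + Bochner from finite lintegral of nonneg
lemma auxInt (f : ℝ → ℝ) (hm : AEStronglyMeasurable f (volume.restrict (Ioi 0)))
    (hnn : ∀ r ∈ Ioi (0:ℝ), 0 ≤ f r)
    (hfin : ∫⁻ r in Ioi (0:ℝ), ENNReal.ofReal (f r) < ∞) :
    IntegrableOn f (Ioi 0) ∧
      ∫ r in Ioi (0:ℝ), f r = (∫⁻ r in Ioi (0:ℝ), ENNReal.ofReal (f r)).toReal := by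
  have hae : 0 ≤ᵐ[volume.restrict (Ioi (0:ℝ))] f :=
    (ae_restrict_iff' measurableSet_Ioi).mpr (ae_of_all _ hnn)
  constructor
  · refine ⟨hm, ?_⟩
    rw [hasFiniteIntegral_iff_ofReal hae]
    exact hfin
  · exact integral_eq_lintegral_of_nonneg_ae hae hm

-- helper: from ae constant to everywhere, for antitone functions
lemma auxAeConst (g : ℝ → ℝ) (hg : AntitoneOn g (Ioi 0)) (a : ℝ)
    (h : ∀ᵐ r ∂(volume.restrict (Ioi 0)), g r = a) : ∀ t > (0:ℝ), g t = a := by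
  intro t ht
  rw [ae_restrict_iff' measurableSet_Ioi, ae_iff] at h
  by_contra hne
  have key : ∀ x y : ℝ, 0 < x → x < y → (∀ r ∈ Ioo x y, g r ≠ a) → False := by
    intro x y hx hxy hbad
    have hsub : Ioo x y ⊆ {r : ℝ | ¬ (r ∈ Ioi (0:ℝ) → g r = a)} := by
      intro r hr
      simp only [mem_setOf_eq, Classical.not_imp]
      exact ⟨lt_trans hx hr.1, hbad r hr⟩
    have := measure_mono_null hsub h
    rw [Real.volume_Ioo] at this
    exact absurd this (by simp [ENNReal.ofReal_eq_zero]; linarith)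
  rcases lt_or_gt_of_ne hne with hlt | hgt
  · -- g t < a : all s ≥ t have g s ≤ g t < a
    exact key t (t+1) ht (by linarith) (fun r hr =>
      ne_of_lt (lt_of_le_of_lt (hg ht (lt_trans ht hr.1) hr.1.le) hlt))
  · -- g t > a : all s ∈ (t/2, t) have g s ≥ g t > a
    exact key (t/2) t (by linarith) (by linarith) (fun r hr =>
      ne_of_gt (lt_of_lt_of_le hgt (hg (lt_trans (by linarith) hr.1) ht hr.2.le)))

open MeasureTheory Set Filter ProbabilityTheory Real
open scoped ENNReal

theorem stmt1 (c : ℝ) (hc : 0 < c) (X : ℝ → ℝ)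
    (hXpos : ∀ t > 0, 0 ≤ X t)
    (hXdiff : ∀ t > 0, DifferentiableAt ℝ X t)
    (hX' : ∀ t > 0, deriv X t ≤ 0)
    (hXe : ∀ t > 0, deriv (fun s => Real.exp (c * s) * X s) t ≤ 0)
    (Y : ℝ → ℝ≥0∞)
    (hY : ∀ p > (0 : ℝ),
      Y p = ENNReal.ofReal p * ∫⁻ r in Ioi (0 : ℝ), ENNReal.ofReal (r ^ (p - 1) * X r))
    (hY0 : Tendsto (fun t => ENNReal.ofReal (X t)) (nhdsWithin 0 (Ioi 0)) (nhds (Y 0)))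
    (p₁ p₂ : ℝ) (hp₁ : 0 ≤ p₁) (hp₁₂ : p₁ < p₂) :
    (ENNReal.ofReal (c ^ p₂ / Real.Gamma (p₂ + 1)) * Y p₂ =
        ENNReal.ofReal (c ^ p₁ / Real.Gamma (p₁ + 1)) * Y p₁ ∧
      ENNReal.ofReal (c ^ p₁ / Real.Gamma (p₁ + 1)) * Y p₁ < ∞) ↔
      ∃ X₀ : ℝ, Tendsto X (nhdsWithin 0 (Ioi 0)) (nhds X₀) ∧
        ∀ t > (0 : ℝ), X t = Real.exp (-(c * t)) * X₀ := by
  set g : ℝ → ℝ := fun r => Real.exp (c * r) * X r with hgdef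
  have keyB : ∀ p, 0 < p → ENNReal.ofReal (c ^ p / Real.Gamma (p + 1)) * Y p
      = ∫⁻ r in Ioi (0:ℝ), ENNReal.ofReal (gammaPDFReal p c r * g r) := by
    intro p hp
    have hGp : 0 < Real.Gamma p := Real.Gamma_pos_of_pos hp
    have hGp1 : Real.Gamma (p+1) = p * Real.Gamma p := by
      rw [Real.Gamma_add_one hp.ne']
    have hKnn : (0:ℝ) ≤ c ^ p / Real.Gamma (p+1) * p := by
      have : (0:ℝ) < c ^ p := Real.rpow_pos_of_pos hc p
      positivity
    rw [hY p hp, ← mul_assoc, ← ENNReal.ofReal_mul (by positivity),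
      ← lintegral_const_mul' _ _ ENNReal.ofReal_ne_top]
    refine setLIntegral_congr_fun measurableSet_Ioi (fun r hr => ?_)
    have hr : (0:ℝ) < r := hr
    rw [← ENNReal.ofReal_mul hKnn]
    congr 1
    unfold gammaPDFReal
    rw [if_pos hr.le, hGp1, Real.exp_neg]
    have h1 : Real.exp (c * r) ≠ 0 := (Real.exp_pos _).ne'
    simp only [hgdef]
    field_simp
  have keyC : ∀ p, 0 < p → ∫⁻ r in Ioi (0:ℝ), ENNReal.ofReal (gammaPDFReal p c r) = 1 :=
    fun p hp => auxKeyC hp hc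
  constructor
  · rintro ⟨heq, hfin⟩
    have hp₂ : 0 < p₂ := lt_of_le_of_lt hp₁ hp₁₂
    have hXc : ContinuousOn X (Ioi 0) :=
      fun t ht => (hXdiff t ht).continuousAt.continuousWithinAt
    have hgc : ContinuousOn g (Ioi 0) :=
      (Continuous.continuousOn
        (Real.continuous_exp.comp (continuous_const.mul continuous_id))).mul hXc
    have hgm : AEStronglyMeasurable g (volume.restrict (Ioi 0)) :=
      hgc.aestronglyMeasurable measurableSet_Ioi
    have hgnn : ∀ r ∈ Ioi (0:ℝ), 0 ≤ g r :=
      fun r hr => mul_nonneg (Real.exp_pos _).le (hXpos r hr)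
    have hganti : AntitoneOn g (Ioi 0) := by
      refine auxAnti g (fun t ht => ?_) hXe
      exact ((differentiableAt_fun_id.const_mul c).exp).mul (hXdiff t ht)
    have final : ∀ a : ℝ, (∀ t > (0:ℝ), g t = a) →
        (∃ X₀ : ℝ, Tendsto X (nhdsWithin 0 (Ioi 0)) (nhds X₀) ∧
          ∀ t > (0 : ℝ), X t = Real.exp (-(c * t)) * X₀) := by
      intro a hconst
      have hXf : ∀ t > (0:ℝ), X t = Real.exp (-(c*t)) * a := by
        intro t ht
        have h1 := hconst t ht
        simp only [hgdef] at h1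
        rw [← h1, ← mul_assoc, ← Real.exp_add]
        simp
      refine ⟨a, ?_, hXf⟩
      have h2 : Tendsto (fun t => Real.exp (-(c*t)) * a) (nhdsWithin 0 (Ioi 0)) (nhds a) := by
        have hcont : Continuous fun t : ℝ => Real.exp (-(c*t)) * a :=
          (Real.continuous_exp.comp (continuous_const.mul continuous_id).neg).mul continuous_const
        have h3 := (hcont.tendsto 0).mono_left (nhdsWithin_le_nhds (s := Ioi 0))
        simpa using h3
      exact h2.congr' (eventually_mem_nhdsWithin.mono fun t ht => (hXf t ht).symm)
    have hφgm : ∀ p : ℝ, AEStronglyMeasurable (fun r => gammaPDFReal p c r * g r)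
        (volume.restrict (Ioi 0)) :=
      fun p => ((stronglyMeasurable_gammaPDFReal p c).aestronglyMeasurable).mul hgm
    rcases hp₁.eq_or_lt with h0 | h0
    · -- p₁ = 0
      rw [← h0] at heq hfin
      rw [Real.rpow_zero, zero_add, Real.Gamma_one] at heq hfin
      simp only [div_one, ENNReal.ofReal_one, one_mul] at heq hfin
      set X₀ := (Y 0).toReal with hX₀
      have hY0of : Y 0 = ENNReal.ofReal X₀ := (ENNReal.ofReal_toReal hfin.ne).symm
      have hXlim : Tendsto X (nhdsWithin 0 (Ioi 0)) (nhds X₀) := by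
        have h2 := (ENNReal.tendsto_toReal hfin.ne).comp hY0
        exact h2.congr' (eventually_mem_nhdsWithin.mono fun t ht =>
          ENNReal.toReal_ofReal (hXpos t ht))
      have hglim : Tendsto g (nhdsWithin 0 (Ioi 0)) (nhds X₀) := by
        have hcont : Continuous fun t : ℝ => Real.exp (c*t) :=
          Real.continuous_exp.comp (continuous_const.mul continuous_id)
        have h1 : Tendsto (fun t => Real.exp (c*t)) (nhdsWithin 0 (Ioi 0)) (nhds 1) := by
          have h3 := (hcont.tendsto 0).mono_left (nhdsWithin_le_nhds (s := Ioi 0))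
          simpa using h3
        simpa using h1.mul hXlim
      have hgle : ∀ t > (0:ℝ), g t ≤ X₀ := by
        intro t ht
        refine ge_of_tendsto hglim ?_
        filter_upwards [Ioo_mem_nhdsGT_of_mem (left_mem_Ico.mpr ht)] with s hs
        exact hganti hs.1 ht hs.2.le
      have hL : ∫⁻ r in Ioi (0:ℝ), ENNReal.ofReal (gammaPDFReal p₂ c r * g r)
          = ENNReal.ofReal X₀ := by rw [← keyB p₂ hp₂, heq, hY0of]
      have hInt2 := auxInt (fun r => gammaPDFReal p₂ c r * g r) (hφgm p₂)
        (fun r hr => mul_nonneg (gammaPDFReal_nonneg hp₂ hc r) (hgnn r hr))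
        (by rw [hL]; exact ENNReal.ofReal_lt_top)
      have hIntφ := auxInt (gammaPDFReal p₂ c)
        ((stronglyMeasurable_gammaPDFReal p₂ c).aestronglyMeasurable)
        (fun r _ => gammaPDFReal_nonneg hp₂ hc r)
        (by rw [keyC p₂ hp₂]; exact ENNReal.one_lt_top)
      have hDeq : (fun r => gammaPDFReal p₂ c r * (X₀ - g r))
          = fun r => X₀ * gammaPDFReal p₂ c r - gammaPDFReal p₂ c r * g r := by
        funext r; ring
      have hDint : IntegrableOn (fun r => gammaPDFReal p₂ c r * (X₀ - g r)) (Ioi 0) := by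
        rw [hDeq]; exact (hIntφ.1.const_mul X₀).sub hInt2.1
      have hDnn : 0 ≤ᵐ[volume.restrict (Ioi (0:ℝ))]
          (fun r => gammaPDFReal p₂ c r * (X₀ - g r)) :=
        (ae_restrict_iff' measurableSet_Ioi).mpr (ae_of_all _ fun r hr =>
          mul_nonneg (gammaPDFReal_nonneg hp₂ hc r) (sub_nonneg.mpr (hgle r hr)))
      have hDzero : ∫ r in Ioi (0:ℝ), gammaPDFReal p₂ c r * (X₀ - g r) = 0 := by
        rw [hDeq, integral_sub (hIntφ.1.const_mul X₀) hInt2.1, integral_const_mul,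
          hIntφ.2, keyC p₂ hp₂, hInt2.2, hL]
        simp [ENNReal.toReal_ofReal_eq_iff, hX₀]
      have hae := (integral_eq_zero_iff_of_nonneg_ae hDnn hDint).mp hDzero
      have hgae : ∀ᵐ r ∂(volume.restrict (Ioi (0:ℝ))), g r = X₀ := by
        filter_upwards [hae, ae_restrict_mem measurableSet_Ioi] with r h1 h2
        have hφpos : 0 < gammaPDFReal p₂ c r := gammaPDFReal_pos hp₂ hc h2
        have h3 : X₀ - g r = 0 := by
          rcases mul_eq_zero.mp h1 with h | h
          · exact absurd h hφpos.ne'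
          · exact h
        linarith [h3]
      exact final X₀ (auxAeConst g hganti X₀ hgae)
    · -- 0 < p₁
      have hG1 : 0 < Real.Gamma p₁ := Real.Gamma_pos_of_pos h0
      have hG2 : 0 < Real.Gamma p₂ := Real.Gamma_pos_of_pos hp₂
      rw [keyB p₁ h0] at hfin
      have hL : ∫⁻ r in Ioi (0:ℝ), ENNReal.ofReal (gammaPDFReal p₂ c r * g r)
          = ∫⁻ r in Ioi (0:ℝ), ENNReal.ofReal (gammaPDFReal p₁ c r * g r) := by
        rw [← keyB p₂ hp₂, ← keyB p₁ h0, heq]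
      have hfin2 : ∫⁻ r in Ioi (0:ℝ), ENNReal.ofReal (gammaPDFReal p₂ c r * g r) < ∞ := by
        rw [hL]; exact hfin
      have hInt1 := auxInt (fun r => gammaPDFReal p₁ c r * g r) (hφgm p₁)
        (fun r hr => mul_nonneg (gammaPDFReal_nonneg h0 hc r) (hgnn r hr)) hfin
      have hInt2 := auxInt (fun r => gammaPDFReal p₂ c r * g r) (hφgm p₂)
        (fun r hr => mul_nonneg (gammaPDFReal_nonneg hp₂ hc r) (hgnn r hr)) hfin2
      have hIntφ1 := auxInt (gammaPDFReal p₁ c)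
        ((stronglyMeasurable_gammaPDFReal p₁ c).aestronglyMeasurable)
        (fun r _ => gammaPDFReal_nonneg h0 hc r)
        (by rw [keyC p₁ h0]; exact ENNReal.one_lt_top)
      have hIntφ2 := auxInt (gammaPDFReal p₂ c)
        ((stronglyMeasurable_gammaPDFReal p₂ c).aestronglyMeasurable)
        (fun r _ => gammaPDFReal_nonneg hp₂ hc r)
        (by rw [keyC p₂ hp₂]; exact ENNReal.one_lt_top)
      set q : ℝ := p₂ - p₁ with hqdef
      have hq : 0 < q := sub_pos.mpr hp₁₂
      set K : ℝ := c ^ (p₁ - p₂) * (Real.Gamma p₂ / Real.Gamma p₁) with hKdef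
      have hK : 0 < K := mul_pos (Real.rpow_pos_of_pos hc _) (div_pos hG2 hG1)
      set r₀ : ℝ := K ^ q⁻¹ with hr₀def
      have hr₀ : 0 < r₀ := Real.rpow_pos_of_pos hK _
      have hr₀q : r₀ ^ q = K := Real.rpow_inv_rpow hK.le hq.ne'
      have hfact : ∀ r ∈ Ioi (0:ℝ), gammaPDFReal p₁ c r - gammaPDFReal p₂ c r
          = (c ^ p₂ / Real.Gamma p₂ * r ^ (p₁ - 1) * Real.exp (-(c * r))) * (K - r ^ q) := by
        intro r hr
        have hr : (0:ℝ) < r := hr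
        unfold gammaPDFReal
        rw [if_pos hr.le, if_pos hr.le]
        have h1 : r ^ (p₂ - 1) = r ^ (p₁ - 1) * r ^ q := by
          rw [← Real.rpow_add hr, hqdef]; ring_nf
        have h2 : c ^ p₂ * c ^ (p₁ - p₂) = c ^ p₁ := by
          rw [← Real.rpow_add hc]; ring_nf
        rw [h1, ← h2, hKdef]
        field_simp
      have hsign : ∀ r ∈ Ioi (0:ℝ),
          0 ≤ (gammaPDFReal p₁ c r - gammaPDFReal p₂ c r) * (g r - g r₀) := by
        intro r hr
        have hrpos : (0:ℝ) < r := hr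
        rw [hfact r hr, mul_assoc]
        refine mul_nonneg (by positivity) ?_
        rcases le_total r r₀ with h | h
        · have h3 : r ^ q ≤ K := by
            rw [← hr₀q]; exact Real.rpow_le_rpow hrpos.le h hq.le
          have h4 : g r₀ ≤ g r := hganti hr hr₀ h
          nlinarith
        · have h3 : K ≤ r ^ q := by
            rw [← hr₀q]; exact Real.rpow_le_rpow hr₀.le h hq.le
          have h4 : g r ≤ g r₀ := hganti hr₀ hr h
          nlinarith
      have hDeq : (fun r => (gammaPDFReal p₁ c r - gammaPDFReal p₂ c r) * (g r - g r₀))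
          = fun r => (gammaPDFReal p₁ c r * g r - gammaPDFReal p₂ c r * g r)
              - g r₀ * (gammaPDFReal p₁ c r - gammaPDFReal p₂ c r) := by
        funext r; ring
      have hI12 : Integrable (fun r => gammaPDFReal p₁ c r * g r - gammaPDFReal p₂ c r * g r)
          (volume.restrict (Ioi 0)) := hInt1.1.sub hInt2.1
      have hIφ12 : Integrable
          (fun r => g r₀ * (gammaPDFReal p₁ c r - gammaPDFReal p₂ c r))
          (volume.restrict (Ioi 0)) := (hIntφ1.1.sub hIntφ2.1).const_mul _
      have hDint : IntegrableOn
          (fun r => (gammaPDFReal p₁ c r - gammaPDFReal p₂ c r) * (g r - g r₀)) (Ioi 0) := by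
        rw [hDeq]
        exact hI12.sub hIφ12
      have hDnn : 0 ≤ᵐ[volume.restrict (Ioi (0:ℝ))]
          (fun r => (gammaPDFReal p₁ c r - gammaPDFReal p₂ c r) * (g r - g r₀)) :=
        (ae_restrict_iff' measurableSet_Ioi).mpr (ae_of_all _ hsign)
      have hDzero : ∫ r in Ioi (0:ℝ),
          (gammaPDFReal p₁ c r - gammaPDFReal p₂ c r) * (g r - g r₀) = 0 := by
        rw [hDeq, integral_sub hI12 hIφ12,
          integral_sub hInt1.1 hInt2.1, integral_const_mul,
          integral_sub hIntφ1.1 hIntφ2.1, hIntφ1.2, hIntφ2.2, keyC p₁ h0, keyC p₂ hp₂,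
          hInt1.2, hInt2.2, hL]
        ring
      have hae := (integral_eq_zero_iff_of_nonneg_ae hDnn hDint).mp hDzero
      have hr₀ae : ∀ᵐ r ∂(volume.restrict (Ioi (0:ℝ))), r ≠ r₀ := by
        refine ae_restrict_of_ae ?_
        have hset : {a : ℝ | ¬ a ≠ r₀} = {r₀} := by ext x; simp
        rw [ae_iff, hset, Real.volume_singleton]
      have hgae : ∀ᵐ r ∂(volume.restrict (Ioi (0:ℝ))), g r = g r₀ := by
        filter_upwards [hae, ae_restrict_mem measurableSet_Ioi, hr₀ae] with r h1 h2 h3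
        have hrpos : (0:ℝ) < r := h2
        have h4 : (c ^ p₂ / Real.Gamma p₂ * r ^ (p₁ - 1) * Real.exp (-(c * r)))
            * ((K - r ^ q) * (g r - g r₀)) = 0 := by
          rw [← mul_assoc, ← hfact r h2]; exact h1
        have hA : (0:ℝ) < c ^ p₂ / Real.Gamma p₂ * r ^ (p₁ - 1) * Real.exp (-(c * r)) := by
          have := Real.rpow_pos_of_pos hc p₂
          have := Real.rpow_pos_of_pos hrpos (p₁ - 1)
          positivity
        rcases mul_eq_zero.mp h4 with h | h
        · exact absurd h hA.ne'
        rcases mul_eq_zero.mp h with h | h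
        · exfalso
          apply h3
          have h5 : r ^ q = r₀ ^ q := by rw [hr₀q]; linarith
          exact le_antisymm
            ((Real.rpow_le_rpow_iff hrpos.le hr₀.le hq).mp h5.le)
            ((Real.rpow_le_rpow_iff hr₀.le hrpos.le hq).mp h5.ge)
        · linarith
      exact final (g r₀) (auxAeConst g hganti (g r₀) hgae)
  · rintro ⟨X₀, hlim, hform⟩
    have hX₀nn : 0 ≤ X₀ :=
      ge_of_tendsto hlim (eventually_mem_nhdsWithin.mono fun t ht => hXpos t ht)
    have hgconst : ∀ r ∈ Ioi (0:ℝ), g r = X₀ := by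
      intro r hr
      simp only [hgdef]
      rw [hform r hr, ← mul_assoc, ← Real.exp_add]
      simp
    have hval : ∀ p, 0 < p →
        ENNReal.ofReal (c ^ p / Real.Gamma (p + 1)) * Y p = ENNReal.ofReal X₀ := by
      intro p hp
      rw [keyB p hp]
      have : ∫⁻ r in Ioi (0:ℝ), ENNReal.ofReal (gammaPDFReal p c r * g r)
          = ∫⁻ r in Ioi (0:ℝ), ENNReal.ofReal X₀ * ENNReal.ofReal (gammaPDFReal p c r) := by
        refine setLIntegral_congr_fun measurableSet_Ioi (fun r hr => ?_)
        rw [hgconst r hr, ENNReal.ofReal_mul (gammaPDFReal_nonneg hp hc r), mul_comm]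
      rw [this, lintegral_const_mul' _ _ ENNReal.ofReal_ne_top, keyC p hp, mul_one]
    have hY0' : Y 0 = ENNReal.ofReal X₀ := by
      have h2 : Tendsto (fun t => ENNReal.ofReal (X t)) (nhdsWithin 0 (Ioi 0))
          (nhds (ENNReal.ofReal X₀)) := (ENNReal.continuous_ofReal.tendsto _).comp hlim
      exact tendsto_nhds_unique hY0 h2
    have hterm : ENNReal.ofReal (c ^ p₁ / Real.Gamma (p₁ + 1)) * Y p₁ = ENNReal.ofReal X₀ := by
      rcases hp₁.eq_or_lt with h0 | h0
      · rw [← h0, hY0', Real.rpow_zero, zero_add, Real.Gamma_one]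
        simp
      · exact hval p₁ h0
    refine ⟨?_, ?_⟩
    · rw [hterm, hval p₂ (lt_of_le_of_lt hp₁ hp₁₂)]
    · rw [hterm]; exact ENNReal.ofReal_lt_top
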